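/- Let u : ℝ → ℤ → ℂ be differentiable in x and satisfy ∂ₓuₙ = uₙ(uₙ₊₁ − uₙ₋₁) for all n. Then for all n: ∂ₓ(uₙ(uₙ₊₁ + uₙ + uₙ₋₁)) = uₙ(uₙ₊₁(uₙ₊₂ + uₙ₊₁ + uₙ) − uₙ₋₁(uₙ + uₙ₋₁ + uₙ₋₂)); that is, the x-derivative of the conserved density h⁽²⁾ₙ = uₙ(uₙ₊₁ + uₙ + uₙ₋₁) along the Volterra flow equals the t-derivative of h⁽¹⁾ₙ = uₙ along the first higher symmetry flow. -/

import Mathlib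

/-- the `x`-derivative of `h⁽²⁾ₙ = uₙ(uₙ₊₁ + uₙ + uₙ₋₁)` along
the Volterra flow equals the right-hand side of the first higher symmetry. -/
theorem volterra_h2_x_derivative
    (u : ℝ → ℤ → ℂ)
    (hu : ∀ (x : ℝ) (n : ℤ), HasDerivAt (fun x => u x n)
      (u x n * (u x (n + 1) - u x (n - 1))) x) :
    ∀ (x : ℝ) (n : ℤ), HasDerivAt
      (fun x => u x n * (u x (n + 1) + u x n + u x (n - 1)))
      (u x n * (u x (n + 1) * (u x (n + 2) + u x (n + 1) + u x n)
        - u x (n - 1) * (u x n + u x (n - 1) + u x (n - 2)))) x := by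
  intro x n
  have h := ((hu x n).mul (((hu x (n+1)).add (hu x n)).add (hu x (n-1))))
  convert h using 1
  · rfl
  · rfl
  have e1 : (n:ℤ) + 1 + 1 = n + 2 := by ring
  have e2 : (n:ℤ) + 1 - 1 = n := by ring
  have e3 : (n:ℤ) - 1 + 1 = n := by ring
  have e4 : (n:ℤ) - 1 - 1 = n - 2 := by ring
  rw [e1, e2, e3, e4]
  simp only [Pi.add_apply]
  ring
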